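/- Let 1 < p < N and μ ∈ ℝ, and define φ(S) = (p-1)|S|^p - (N-p)|S|^{p-2} S - μ. Then φ attains its minimum value μ₀ - μ at S = (N-p)/p, where μ₀ = -((N-p)/p)^p. Consequently φ has a real root if and only if μ ≥ μ₀. -/

import Mathlib

theorem stmt0 (p N μ : ℝ) (hp : 1 < p) (hpN : p < N)
    (μ₀ : ℝ) (hμ₀ : μ₀ = -((N - p) / p) ^ p)
    (φ : ℝ → ℝ)
    (hφ : ∀ S : ℝ, φ S = (p - 1) * |S| ^ p - (N - p) * (Real.sign S * |S| ^ (p - 1)) - μ) :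
    (∀ S : ℝ, φ ((N - p) / p) ≤ φ S) ∧
    φ ((N - p) / p) = μ₀ - μ ∧
    ((∃ S : ℝ, φ S = 0) ↔ μ₀ ≤ μ) := by
  have hp0 : (0:ℝ) < p := lt_trans one_pos hp
  set c : ℝ := (N - p) / p with hc_def
  have hc : 0 < c := div_pos (by linarith) hp0
  have hNp : N - p = p * c := by rw [hc_def]; field_simp
  -- key weighted AM-GM inequality
  have key : ∀ t : ℝ, 0 ≤ t → p * c * t ^ (p-1) ≤ (p-1) * t ^ p + c ^ p := by
    intro t ht
    have h1 : (t ^ p) ^ ((p-1)/p) * (c ^ p) ^ (1/p)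
        ≤ ((p-1)/p) * t ^ p + (1/p) * c ^ p :=
      Real.geom_mean_le_arith_mean2_weighted
        (div_nonneg (by linarith) hp0.le) (by positivity)
        (Real.rpow_nonneg ht p) (Real.rpow_nonneg hc.le p) (by field_simp; ring)
    have e1 : (t ^ p) ^ ((p-1)/p) = t ^ (p-1) := by
      rw [← Real.rpow_mul ht]
      congr 1
      field_simp
    have e2 : (c ^ p) ^ (1/p) = c := by
      rw [← Real.rpow_mul hc.le]
      rw [show p * (1/p) = 1 by field_simp, Real.rpow_one]
    rw [e1, e2] at h1
    have h3 := mul_le_mul_of_nonneg_left h1 hp0.le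
    calc p * c * t ^ (p-1) = p * (t ^ (p-1) * c) := by ring
      _ ≤ p * (((p-1)/p) * t ^ p + (1/p) * c ^ p) := h3
      _ = (p-1) * t ^ p + c ^ p := by field_simp
  have hcp : c ^ p = c * c ^ (p-1) := by
    have h := Real.rpow_add hc 1 (p-1)
    rw [show (1:ℝ) + (p-1) = p by ring, Real.rpow_one] at h
    exact h
  have hval : φ c = μ₀ - μ := by
    rw [hφ, Real.sign_of_pos hc, abs_of_pos hc, hμ₀, hNp, one_mul]
    linear_combination p * hcp
  have hmin : ∀ S, μ₀ - μ ≤ φ S := by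
    intro S
    rw [hφ, hμ₀]
    rcases le_or_gt S 0 with hS | hS
    · have hcp0 : (0:ℝ) ≤ c ^ p := Real.rpow_nonneg hc.le p
      have hA : 0 ≤ (p-1) * |S| ^ p := mul_nonneg (by linarith) (Real.rpow_nonneg (abs_nonneg S) p)
      have hsgn : Real.sign S ≤ 0 := by
        rcases hS.lt_or_eq with h | h
        · rw [Real.sign_of_neg h]; norm_num
        · rw [h, Real.sign_zero]
      have hB : (N-p) * (Real.sign S * |S| ^ (p-1)) ≤ 0 := by
        apply mul_nonpos_of_nonneg_of_nonpos (by linarith)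
        exact mul_nonpos_of_nonpos_of_nonneg hsgn (Real.rpow_nonneg (abs_nonneg S) _)
      linarith
    · rw [Real.sign_of_pos hS, abs_of_pos hS, one_mul, hNp]
      have := key S hS.le
      linarith
  refine ⟨fun S => hval ▸ hmin S, hval, ?_⟩
  constructor
  · rintro ⟨S, hS⟩
    have := hmin S
    rw [hS] at this
    linarith
  · intro hμ
    set X : ℝ := max 1 (max c ((|μ| + p*c)/(p-1))) with hX_def
    have hX1 : 1 ≤ X := le_max_left _ _
    have hXc : c ≤ X := le_trans (le_max_left _ _) (le_max_right _ _)
    have hXμ : (|μ| + p*c)/(p-1) ≤ X := le_trans (le_max_right _ _) (le_max_right _ _)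
    have hXpos : 0 < X := lt_of_lt_of_le one_pos hX1
    have hφX : 0 ≤ φ X := by
      rw [hφ, Real.sign_of_pos hXpos, abs_of_pos hXpos, one_mul, hNp]
      have h1 : 1 ≤ X ^ (p-1) := Real.one_le_rpow hX1 (by linarith)
      have h2 : X ^ p = X ^ (p-1) * X := by
        have h := Real.rpow_add hXpos (p-1) 1
        rw [show (p-1) + 1 = p by ring, Real.rpow_one] at h
        exact h
      have h3 : |μ| + p*c ≤ X * (p-1) := (div_le_iff₀ (by linarith)).mp hXμ
      have h4 : 0 ≤ (p-1)*X - p*c := by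
        have := abs_nonneg μ; linarith
      have h5 : 1 * ((p-1)*X - p*c) ≤ X ^ (p-1) * ((p-1)*X - p*c) :=
        mul_le_mul_of_nonneg_right h1 h4
      rw [h2]
      have := le_abs_self μ
      nlinarith
    have hφc : φ c ≤ 0 := by rw [hval]; linarith
    have hcont : ContinuousOn φ (Set.Icc c X) := by
      have heq : ∀ x ∈ Set.Icc c X, φ x = (p-1) * x ^ p - (N-p) * x ^ (p-1) - μ := by
        intro x hx
        have hx0 : 0 < x := lt_of_lt_of_le hc hx.1
        rw [hφ, Real.sign_of_pos hx0, abs_of_pos hx0, one_mul]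
      apply ContinuousOn.congr ?_ heq
      have c1 : ContinuousOn (fun x : ℝ => x ^ p) (Set.Icc c X) := fun x _ =>
        (Real.continuousAt_rpow_const x p (Or.inr hp0.le)).continuousWithinAt
      have c2 : ContinuousOn (fun x : ℝ => x ^ (p-1)) (Set.Icc c X) := fun x _ =>
        (Real.continuousAt_rpow_const x (p-1) (Or.inr (by linarith))).continuousWithinAt
      exact ((continuousOn_const.mul c1).sub (continuousOn_const.mul c2)).sub continuousOn_const
    obtain ⟨S, _, hS⟩ := intermediate_value_Icc hXc hcont ⟨hφc, hφX⟩
    exact ⟨S, hS⟩
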